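/- arXiv:2206.08810 — 7 statements merged into one kernel-verified Lean document; each statement's English description precedes it below -/
import Mathlib

section
/- Let n ≥ 1, W a linear subspace of ℝⁿ, d, c ∈ ℝⁿ, and 0 < μ' ≤ μ. Suppose (x, s) is a central path point at parameter μ and (x', s') is a central path point at parameter μ'. Then ∑_{i=1}^n (x'_i/x_i + s'_i/s_i) ≤ 2n, i.e., ‖x'/x + s'/s‖₁ ≤ 2n (quotients of vectors taken entrywise). -/
open scoped RealInnerProductSpace

theorem statement2 (n : ℕ) (hn : 1 ≤ n)
    (W : Submodule ℝ (EuclideanSpace ℝ (Fin n)))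
    (d c : EuclideanSpace ℝ (Fin n))
    (μ μ' : ℝ) (hμ'pos : 0 < μ') (hμ'μ : μ' ≤ μ)
    (x s x' s' : EuclideanSpace ℝ (Fin n))
    (hxW : x - d ∈ W) (hsW : s - c ∈ Wᗮ)
    (hxpos : ∀ i, 0 < x i) (hspos : ∀ i, 0 < s i)
    (hxs : ∀ i, x i * s i = μ)
    (hxW' : x' - d ∈ W) (hsW' : s' - c ∈ Wᗮ)
    (hxpos' : ∀ i, 0 < x' i) (hspos' : ∀ i, 0 < s' i)
    (hxs' : ∀ i, x' i * s' i = μ') :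
    ∑ i, (x' i / x i + s' i / s i) ≤ 2 * n := by
  have hμpos : 0 < μ := lt_of_lt_of_le hμ'pos hμ'μ
  have hxx : x - x' ∈ W := by
    have := W.sub_mem hxW hxW'
    simpa using this
  have hss : s - s' ∈ Wᗮ := by
    have := Wᗮ.sub_mem hsW hsW'
    simpa using this
  have horth : ⟪x - x', s - s'⟫ = 0 :=
    Submodule.inner_right_of_mem_orthogonal hxx hss
  have hsum : ∑ i, (x i - x' i) * (s i - s' i) = 0 := by
    rw [← horth]
    simp [PiLp.inner_apply, RCLike.inner_apply, mul_comm]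
  have hexp : ∑ i, (x' i * s i + x i * s' i) = n * μ + n * μ' := by
    have : ∑ i, (x i * s i - x i * s' i - x' i * s i + x' i * s' i) = 0 := by
      rw [← hsum]; congr 1; ext i; ring
    have h2 : ∑ i, (x i * s i) + ∑ i, (x' i * s' i)
        = ∑ i, (x' i * s i + x i * s' i) := by
      have := this
      simp only [Finset.sum_add_distrib, Finset.sum_sub_distrib] at this ⊢
      linarith
    simp [hxs, hxs'] at h2
    linarith [h2]
  have heq : ∑ i, (x' i / x i + s' i / s i) = (n * μ + n * μ') / μ := by
    rw [← hexp, Finset.sum_div]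
    congr 1
    ext i
    have hx := (hxpos i).ne'
    have hs := (hspos i).ne'
    have hμ : x i * s i = μ := hxs i
    field_simp
    rw [← hμ]
    ring
  rw [heq]
  rw [div_le_iff₀ hμpos]
  have hn1 : (1 : ℝ) ≤ n := by exact_mod_cast hn
  nlinarith [mul_le_mul_of_nonneg_left hμ'μ (le_trans zero_le_one hn1)]
end

section
/- Let n ≥ 1, W a linear subspace of ℝⁿ, d, c ∈ ℝⁿ, and θ ∈ [0,1). Suppose x̄ ∈ W + d, s̄ ∈ W⊥ + c, x̄ > 0, s̄ > 0, and x̄_i s̄_i ≥ (1 − θ)·μ for all i ∈ [n], where μ = ⟨x̄, s̄⟩/n. If (x, s) is a central path point at parameter μ, then for every i ∈ [n]: (1/(2n))·x̄_i ≤ x_i ≤ (2n/(1 − θ))·x̄_i and (1/(2n))·s̄_i ≤ s_i ≤ (2n/(1 − θ))·s̄_i. -/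
open scoped RealInnerProductSpace

theorem statement3 (n : ℕ) (hn : 1 ≤ n)
    (W : Submodule ℝ (EuclideanSpace ℝ (Fin n)))
    (d c : EuclideanSpace ℝ (Fin n))
    (θ : ℝ) (hθ0 : 0 ≤ θ) (hθ1 : θ < 1)
    (xb sb x s : EuclideanSpace ℝ (Fin n))
    (hxb : xb - d ∈ W) (hsb : sb - c ∈ Wᗮ)
    (hxbpos : ∀ i, 0 < xb i) (hsbpos : ∀ i, 0 < sb i)
    (hwide : ∀ i, (1 - θ) * (⟪xb, sb⟫ / n) ≤ xb i * sb i)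
    (hxW : x - d ∈ W) (hsW : s - c ∈ Wᗮ)
    (hxpos : ∀ i, 0 < x i) (hspos : ∀ i, 0 < s i)
    (hxs : ∀ i, x i * s i = ⟪xb, sb⟫ / n) :
    ∀ i, (1 / (2 * n)) * xb i ≤ x i ∧ x i ≤ (2 * n / (1 - θ)) * xb i ∧
      (1 / (2 * n)) * sb i ≤ s i ∧ s i ≤ (2 * n / (1 - θ)) * sb i := by
  have hinner : ∀ a b : EuclideanSpace ℝ (Fin n), ⟪a, b⟫ = ∑ i, a i * b i := by
    intro a b
    simp [PiLp.inner_apply, RCLike.inner_apply, starRingEnd_apply]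
    exact Finset.sum_congr rfl fun i _ => mul_comm _ _
  set μ : ℝ := ⟪xb, sb⟫ / n with hμ
  have hn0 : (0 : ℝ) < n := by exact_mod_cast hn
  have hμpos : 0 < μ := by
    have := hxs ⟨0, hn⟩
    nlinarith [hxpos ⟨0, hn⟩, hspos ⟨0, hn⟩]
  have hxsinner : ⟪x, s⟫ = n * μ := by
    rw [hinner]
    simp only [hxs]
    simp [Finset.sum_const, hμ]
  have hxbsb : ⟪xb, sb⟫ = n * μ := by
    rw [hμ]; field_simp
  have hxsub : x - xb ∈ W := by
    have := W.sub_mem hxW hxb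
    simpa using this
  have hssub : s - sb ∈ Wᗮ := by
    have := Wᗮ.sub_mem hsW hsb
    simpa using this
  have horth : ⟪x - xb, s - sb⟫ = 0 := by
    exact (Submodule.mem_orthogonal W (s - sb)).mp hssub (x - xb) hxsub
  have hkey : ⟪x, sb⟫ + ⟪xb, s⟫ = 2 * n * μ := by
    have h := horth
    rw [inner_sub_left, inner_sub_right, inner_sub_right] at h
    linarith [hxsinner, hxbsb, h]
  have hxsb_pos : (0:ℝ) ≤ ⟪x, sb⟫ := by
    rw [hinner]
    exact Finset.sum_nonneg fun i _ => le_of_lt (mul_pos (hxpos i) (hsbpos i))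
  have hxbs_pos : (0:ℝ) ≤ ⟪xb, s⟫ := by
    rw [hinner]
    exact Finset.sum_nonneg fun i _ => le_of_lt (mul_pos (hxbpos i) (hspos i))
  have hterm1 : ∀ i, x i * sb i ≤ 2 * n * μ := by
    intro i
    have h1 : x i * sb i ≤ ⟪x, sb⟫ := by
      rw [hinner]
      exact Finset.single_le_sum (f := fun j => x j * sb j)
        (fun j _ => le_of_lt (mul_pos (hxpos j) (hsbpos j))) (Finset.mem_univ i)
    linarith
  have hterm2 : ∀ i, xb i * s i ≤ 2 * n * μ := by
    intro i
    have h1 : xb i * s i ≤ ⟪xb, s⟫ := by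
      rw [hinner]
      exact Finset.single_le_sum (f := fun j => xb j * s j)
        (fun j _ => le_of_lt (mul_pos (hxbpos j) (hspos j))) (Finset.mem_univ i)
    linarith
  intro i
  have hθ : (0:ℝ) < 1 - θ := by linarith
  have hxi := hxpos i
  have hsi := hspos i
  have hxbi := hxbpos i
  have hsbi := hsbpos i
  have hw := hwide i
  have hxsi := hxs i
  have ht1 := hterm1 i
  have ht2 := hterm2 i
  refine ⟨?_, ?_, ?_, ?_⟩
  · -- xb i / (2n) ≤ x i : from xb i * s i ≤ 2nμ = 2n * x i * s i
    rw [div_mul_eq_mul_div, div_le_iff₀ (by positivity)]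
    nlinarith
  · -- x i ≤ 2n/(1-θ) * xb i
    rw [div_mul_eq_mul_div, le_div_iff₀ hθ]
    nlinarith [mul_le_mul_of_nonneg_left ht1 (le_of_lt hxbi),
      mul_le_mul_of_nonneg_left hw (le_of_lt hxi)]
  · rw [div_mul_eq_mul_div, div_le_iff₀ (by positivity)]
    nlinarith
  · rw [div_mul_eq_mul_div, le_div_iff₀ hθ]
    nlinarith [mul_le_mul_of_nonneg_left ht2 (le_of_lt hsbi),
      mul_le_mul_of_nonneg_left hw (le_of_lt hsi)]
end

section
/- Let n ≥ 1, W a linear subspace of ℝⁿ, d, c ∈ ℝⁿ, and β ∈ (0, 1/6]. Suppose x ∈ W + d, s ∈ W⊥ + c, x > 0, s > 0, μ = ⟨x,s⟩/n > 0 and ‖xs/μ − 1‖ ≤ β (products and quotients of vectors entrywise, 1 the all-ones vector, ‖·‖ the Euclidean norm). Let Δx ∈ W and Δs ∈ W⊥ satisfy ‖Δx·Δs‖ ≤ βμ/4, and set γ = ‖(x + Δx)(s + Δs)‖/μ. Then for every α with 0 ≤ α ≤ 1 − 4γ/β, writing x_α = x + αΔx, s_α = s + αΔs and μ_α = ⟨x_α,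 s_α⟩/n, we have: x_α ≥ 0, s_α ≥ 0, ‖x_α s_α − μ_α·1‖ ≤ 2β·μ_α, and μ_α ≤ (1 + (3/2)·β/√n)·(1 − α)·μ. -/
open scoped RealInnerProductSpace

/-- Interpret a function `Fin n → ℝ` as a vector of `EuclideanSpace ℝ (Fin n)`. -/
noncomputable def euc {n : ℕ} (f : Fin n → ℝ) : EuclideanSpace ℝ (Fin n) := WithLp.toLp 2 f

theorem abs_le_euc (n : ℕ) (f : Fin n → ℝ) (i : Fin n) : |f i| ≤ ‖euc f‖ := by
  rw [EuclideanSpace.norm_eq]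
  rw [show |f i| = Real.sqrt (|f i|^2) by rw [Real.sqrt_sq_eq_abs, abs_abs]]
  apply Real.sqrt_le_sqrt
  rw [sq_abs]
  have := Finset.single_le_sum (f := fun j => ‖euc f j‖^2) (fun j _ => by positivity) (Finset.mem_univ i)
  simpa [euc, Real.norm_eq_abs, sq_abs] using this

set_option maxHeartbeats 1000000 in
theorem statement4 (n : ℕ) (hn : 1 ≤ n)
    (W : Submodule ℝ (EuclideanSpace ℝ (Fin n)))
    (d c : EuclideanSpace ℝ (Fin n))
    (β : ℝ) (hβ0 : 0 < β) (hβ1 : β ≤ 1 / 6)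
    (x s Δx Δs : EuclideanSpace ℝ (Fin n))
    (hx : x - d ∈ W) (hs : s - c ∈ Wᗮ)
    (hxpos : ∀ i, 0 < x i) (hspos : ∀ i, 0 < s i)
    (μ : ℝ) (hμdef : μ = ⟪x, s⟫ / n) (hμpos : 0 < μ)
    (hctr : ‖euc (fun i => x i * s i / μ - 1)‖ ≤ β)
    (hΔx : Δx ∈ W) (hΔs : Δs ∈ Wᗮ)
    (hprod : ‖euc (fun i => Δx i * Δs i)‖ ≤ β * μ / 4)
    (γ : ℝ) (hγ : γ = ‖euc (fun i => (x i + Δx i) * (s i + Δs i))‖ / μ) :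
    ∀ α : ℝ, 0 ≤ α → α ≤ 1 - 4 * γ / β →
      (∀ i, 0 ≤ x i + α * Δx i) ∧ (∀ i, 0 ≤ s i + α * Δs i) ∧
      ‖euc (fun i => (x i + α * Δx i) * (s i + α * Δs i) -
          ⟪x + α • Δx, s + α • Δs⟫ / n)‖ ≤ 2 * β * (⟪x + α • Δx, s + α • Δs⟫ / n) ∧
      ⟪x + α • Δx, s + α • Δs⟫ / n ≤ (1 + (3 / 2) * β / Real.sqrt n) * (1 - α) * μ := by
  have hn0 : (0:ℝ) < n := by exact_mod_cast Nat.lt_of_lt_of_le Nat.zero_lt_one hn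
  have hsn1 : (1:ℝ) ≤ Real.sqrt n := by
    rw [show (1:ℝ) = Real.sqrt 1 by simp]
    exact Real.sqrt_le_sqrt (by exact_mod_cast hn)
  have hsn0 : (0:ℝ) < Real.sqrt n := lt_of_lt_of_le one_pos hsn1
  have hsnsq : Real.sqrt n * Real.sqrt n = (n:ℝ) := Real.mul_self_sqrt hn0.le
  have hinner : ∀ a b : EuclideanSpace ℝ (Fin n), ⟪a,b⟫ = ∑ i, a i * b i := fun a b => by
    simp [PiLp.inner_apply, mul_comm]
  have hγ0 : 0 ≤ γ := by rw [hγ]; positivity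
  have hγμ : ‖euc (fun i => (x i + Δx i) * (s i + Δs i))‖ = γ * μ := by
    rw [hγ]; field_simp
  have hA : (∑ i, x i * s i) = n * μ := by
    rw [hμdef, hinner]; field_simp
  have hC : (∑ i, Δx i * Δs i) = 0 := by
    rw [← hinner]
    exact Submodule.inner_right_of_mem_orthogonal hΔx hΔs
  set σ : ℝ := (∑ i, (x i + Δx i) * (s i + Δs i)) / n with hσdef
  have hB : (∑ i, (x i * Δs i + s i * Δx i)) = n * σ - n * μ := by
    have hexp : (∑ i, (x i + Δx i) * (s i + Δs i))
        = (∑ i, x i * s i) + (∑ i, (x i * Δs i + s i * Δx i)) + (∑ i, Δx i * Δs i) := by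
      rw [← Finset.sum_add_distrib, ← Finset.sum_add_distrib]
      exact Finset.sum_congr rfl fun i _ => by ring
    have hnσ : (∑ i, (x i + Δx i) * (s i + Δs i)) = n * σ := by
      rw [hσdef]; field_simp
    rw [hA, hC] at hexp
    linarith [hnσ ▸ hexp]
  have happly : ∀ (t : ℝ) (i : Fin n), (x + t • Δx) i = x i + t * Δx i := fun t i => rfl
  have happly' : ∀ (t : ℝ) (i : Fin n), (s + t • Δs) i = s i + t * Δs i := fun t i => rfl
  have hμt : ∀ t : ℝ, ⟪x + t • Δx, s + t • Δs⟫ / n = (1-t)*μ + t*σ := by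
    intro t
    rw [hinner]
    have hsum3 : (∑ i, (x + t • Δx) i * (s + t • Δs) i)
        = (∑ i, x i * s i) + t * (∑ i, (x i * Δs i + s i * Δx i))
          + t^2 * (∑ i, Δx i * Δs i) := by
      rw [Finset.mul_sum, Finset.mul_sum, ← Finset.sum_add_distrib, ← Finset.sum_add_distrib]
      exact Finset.sum_congr rfl fun i _ => by rw [happly, happly']; ring
    rw [hsum3, hA, hB, hC]
    field_simp
    ring
  -- Cauchy-Schwarz bound on σ
  have hone : ‖euc (fun _ : Fin n => (1:ℝ))‖ = Real.sqrt n := by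
    rw [EuclideanSpace.norm_eq]; simp [euc]
  have hcs : |σ| * Real.sqrt n ≤ γ * μ := by
    have h1 : (∑ i, (x i + Δx i) * (s i + Δs i))
        = ⟪euc (fun _ : Fin n => (1:ℝ)), euc (fun i => (x i + Δx i) * (s i + Δs i))⟫ := by
      rw [hinner]
      exact Finset.sum_congr rfl fun i _ => by simp [euc]
    have h2 : |σ| * n ≤ Real.sqrt n * (γ * μ) := by
      have h3 : |σ| * n = |∑ i, (x i + Δx i) * (s i + Δs i)| := by
        rw [hσdef, abs_div, Nat.abs_cast]
        field_simp
      rw [h3, h1]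
      calc |⟪euc (fun _ : Fin n => (1:ℝ)), euc (fun i => (x i + Δx i) * (s i + Δs i))⟫|
          ≤ ‖euc (fun _ : Fin n => (1:ℝ))‖ * ‖euc (fun i => (x i + Δx i) * (s i + Δs i))‖ :=
            abs_real_inner_le_norm _ _
        _ = Real.sqrt n * (γ * μ) := by rw [hone, hγμ]
    calc |σ| * Real.sqrt n = |σ| * ((n:ℝ) / Real.sqrt n) := by rw [Real.div_sqrt]
      _ = |σ| * n / Real.sqrt n := by ring
      _ ≤ Real.sqrt n * (γ * μ) / Real.sqrt n := by
          exact div_le_div_of_nonneg_right h2 hsn0.le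
      _ = γ * μ := by field_simp
  have hσle : |σ| ≤ γ * μ := by
    have h6 : |σ| * 1 ≤ |σ| * Real.sqrt n := mul_le_mul_of_nonneg_left hsn1 (abs_nonneg σ)
    linarith [hcs]
  -- norm bound pieces
  have hxsnorm : ‖euc (fun i => x i * s i - μ)‖ ≤ β * μ := by
    have hvec1 : euc (fun i => x i * s i - μ) = μ • euc (fun i => x i * s i / μ - 1) := by
      ext i; simp only [euc, PiLp.toLp_apply, PiLp.smul_apply, smul_eq_mul]; field_simp
    rw [hvec1, norm_smul, Real.norm_eq_abs, abs_of_pos hμpos]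
    nlinarith [hctr, hμpos]
  have hvσnorm : ‖euc (fun i => (x i + Δx i) * (s i + Δs i) - σ)‖ ≤ 2 * (γ * μ) := by
    have hvec2 : euc (fun i => (x i + Δx i) * (s i + Δs i) - σ)
        = euc (fun i => (x i + Δx i) * (s i + Δs i)) - σ • euc (fun _ => (1:ℝ)) := by
      ext i; simp [euc]
    rw [hvec2]
    calc ‖euc (fun i => (x i + Δx i) * (s i + Δs i)) - σ • euc (fun _ : Fin n => (1:ℝ))‖
        ≤ ‖euc (fun i => (x i + Δx i) * (s i + Δs i))‖ + ‖σ • euc (fun _ : Fin n => (1:ℝ))‖ :=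
          norm_sub_le _ _
      _ = γ * μ + |σ| * Real.sqrt n := by
          rw [hγμ, norm_smul, Real.norm_eq_abs, hone]
      _ ≤ 2 * (γ * μ) := by linarith [hcs]
  -- THE KEY LEMMA
  have key : ∀ t : ℝ, 0 ≤ t → t ≤ 1 - 4*γ/β →
      (‖euc (fun i => (x i + t*Δx i) * (s i + t*Δs i) - ⟪x + t • Δx, s + t • Δs⟫/n)‖
        ≤ 2*β*(⟪x + t • Δx, s + t • Δs⟫/n))
      ∧ ((1-t)*(1-β/4)*μ ≤ ⟪x + t • Δx, s + t • Δs⟫/n)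
      ∧ (⟪x + t • Δx, s + t • Δs⟫/n ≤ (1 + (3/2)*β/Real.sqrt n)*(1-t)*μ) := by
    intro t ht0 ht1
    have ht1' : t ≤ 1 := le_trans ht1 (by
      have : 0 ≤ 4*γ/β := by positivity
      linarith)
    have hγt : 4*(γ*μ) ≤ β*(1-t)*μ := by
      have h4 : 4*γ/β ≤ 1 - t := by linarith
      rw [div_le_iff₀ hβ0] at h4
      nlinarith [hμpos]
    have hγμ0 : 0 ≤ γ * μ := by positivity
    simp only [hμt]
    -- lower bound on t*σ
    have htσlow : -(γ*μ) ≤ t*σ := by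
      nlinarith [neg_abs_le σ, abs_nonneg σ, hσle, mul_nonneg ht0 (abs_nonneg σ)]
    have htσhigh : t*σ*Real.sqrt n ≤ γ*μ := by
      have h1 : t*(σ*Real.sqrt n) ≤ t*(|σ| *Real.sqrt n) :=
        mul_le_mul_of_nonneg_left (mul_le_mul_of_nonneg_right (le_abs_self σ) hsn0.le) ht0
      have h2 : t*(|σ| *Real.sqrt n) ≤ 1*(|σ| *Real.sqrt n) :=
        mul_le_mul_of_nonneg_right ht1' (by positivity)
      nlinarith [hcs]
    refine ⟨?_, ?_, ?_⟩
    · -- proximity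
      have hid : euc (fun i => (x i + t*Δx i) * (s i + t*Δs i) - ((1-t)*μ + t*σ))
          = (1-t) • euc (fun i => x i * s i - μ)
            + t • euc (fun i => (x i + Δx i)*(s i + Δs i) - σ)
            - (t*(1-t)) • euc (fun i => Δx i * Δs i) := by
        ext i; simp only [euc, PiLp.toLp_apply, PiLp.add_apply, PiLp.sub_apply, PiLp.smul_apply, smul_eq_mul]; ring
      have hnorm : ‖euc (fun i => (x i + t*Δx i) * (s i + t*Δs i) - ((1-t)*μ + t*σ))‖
          ≤ (1-t)*(β*μ) + t*(2*(γ*μ)) + (t*(1-t))*(β*μ/4) := by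
        rw [hid]
        refine le_trans (norm_sub_le _ _) ?_
        refine add_le_add (le_trans (norm_add_le _ _) (add_le_add ?_ ?_)) ?_ <;>
          rw [norm_smul, Real.norm_eq_abs]
        · rw [abs_of_nonneg (by linarith)]
          exact mul_le_mul_of_nonneg_left hxsnorm (by linarith)
        · rw [abs_of_nonneg ht0]
          exact mul_le_mul_of_nonneg_left hvσnorm ht0
        · rw [abs_of_nonneg (by nlinarith)]
          exact mul_le_mul_of_nonneg_left hprod (by nlinarith)
      refine le_trans hnorm ?_
      nlinarith [mul_le_mul_of_nonneg_left htσlow (by linarith : (0:ℝ) ≤ 2*β),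
        mul_le_mul_of_nonneg_right ht1' hγμ0, hγt,
        mul_le_mul_of_nonneg_left hγt hβ0.le,
        mul_nonneg (mul_nonneg hβ0.le (sub_nonneg.mpr ht1')) hμpos.le,
        mul_nonneg ht0 hγμ0, sq_nonneg t, sq_nonneg (1-t),
        mul_nonneg (mul_nonneg ht0 (sub_nonneg.mpr ht1')) (mul_nonneg hβ0.le hμpos.le)]
    · -- lower bound on gap
      nlinarith [htσlow, hγt]
    · -- upper bound on gap
      have h3 : t*σ*Real.sqrt n ≤ (3/2)*β*((1-t)*μ) := by nlinarith [htσhigh, hγt, hγμ0]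
      have h4 : t*σ ≤ (3/2)*β*((1-t)*μ) / Real.sqrt n := (le_div_iff₀ hsn0).mpr h3
      have h5 : (1 + (3/2)*β/Real.sqrt n)*(1-t)*μ
          = (1-t)*μ + (3/2)*β*((1-t)*μ) / Real.sqrt n := by field_simp
      linarith [h4, h5.ge, h5.le]
  -- zero entries are impossible for t < 1
  have hzero : ∀ t : ℝ, 0 ≤ t → t < 1 → t ≤ 1 - 4*γ/β → ∀ i,
      (x i + t*Δx i) * (s i + t*Δs i) ≠ 0 := by
    intro t ht0 htlt ht2 i h0
    obtain ⟨k1, k2, _⟩ := key t ht0 ht2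
    have hμtpos : 0 < ⟪x + t • Δx, s + t • Δs⟫/(n:ℝ) := by
      have hp : (0:ℝ) < (1-t)*(1-β/4)*μ :=
        mul_pos (mul_pos (by linarith) (by linarith)) hμpos
      linarith [k2]
    have habs : |(x i + t*Δx i) * (s i + t*Δs i) - ⟪x + t • Δx, s + t • Δs⟫/(n:ℝ)|
        ≤ ‖euc (fun j => (x j + t*Δx j) * (s j + t*Δs j) - ⟪x + t • Δx, s + t • Δs⟫/(n:ℝ))‖ := by
      simpa using abs_le_euc n (fun j => (x j + t*Δx j) * (s j + t*Δs j) - ⟪x + t • Δx, s + t • Δs⟫/(n:ℝ)) i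
    rw [h0, zero_sub, abs_neg, abs_of_pos hμtpos] at habs
    nlinarith [k1, habs, hμtpos, mul_le_mul_of_nonneg_right hβ1 hμtpos.le]
  intro α hα0 hα1
  have hα1' : α ≤ 1 := le_trans hα1 (by
    have : 0 ≤ 4*γ/β := by positivity
    linarith)
  have hposx : ∀ i, 0 ≤ x i + α * Δx i := by
    intro i
    by_contra hneg
    push_neg at hneg
    have hcont : ContinuousOn (fun t : ℝ => x i + t * Δx i) (Set.Icc 0 α) :=
      (continuous_const.add (continuous_id.mul continuous_const)).continuousOn
    have hiv := intermediate_value_Icc' hα0 hcont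
    have h0mem : (0:ℝ) ∈ Set.Icc ((fun t : ℝ => x i + t * Δx i) α)
        ((fun t : ℝ => x i + t * Δx i) 0) := by
      constructor
      · simpa using hneg.le
      · simpa using (hxpos i).le
    obtain ⟨t, ht, hft⟩ := hiv h0mem
    simp only at hft
    have htne : t ≠ α := by
      intro h; rw [h] at hft; linarith
    have htlt1 : t < 1 := lt_of_lt_of_le (lt_of_le_of_ne ht.2 htne) hα1'
    exact hzero t ht.1 htlt1 (le_trans ht.2 hα1) i (by rw [hft, zero_mul])
  have hposs : ∀ i, 0 ≤ s i + α * Δs i := by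
    intro i
    by_contra hneg
    push_neg at hneg
    have hcont : ContinuousOn (fun t : ℝ => s i + t * Δs i) (Set.Icc 0 α) :=
      (continuous_const.add (continuous_id.mul continuous_const)).continuousOn
    have hiv := intermediate_value_Icc' hα0 hcont
    have h0mem : (0:ℝ) ∈ Set.Icc ((fun t : ℝ => s i + t * Δs i) α)
        ((fun t : ℝ => s i + t * Δs i) 0) := by
      constructor
      · simpa using hneg.le
      · simpa using (hspos i).le
    obtain ⟨t, ht, hft⟩ := hiv h0mem
    simp only at hft
    have htne : t ≠ α := by
      intro h; rw [h] at hft; linarith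
    have htlt1 : t < 1 := lt_of_lt_of_le (lt_of_le_of_ne ht.2 htne) hα1'
    exact hzero t ht.1 htlt1 (le_trans ht.2 hα1) i (by rw [hft, mul_zero])
  obtain ⟨k1, _, k3⟩ := key α hα0 hα1
  exact ⟨hposx, hposs, k1, k3⟩
end

section
/- For all real numbers u, v > 0, the denominator 1 − α + α·u·v is positive for all α ∈ [0,1], the function α ↦ ((1 − α + αu)(1 − α + αv))/(1 − α + α·u·v) attains its minimum over [0,1], and min_{α ∈ [0,1]} ((1 − α + αu)(1 − α + αv))/(1 − α + α·u·v) = min{ 1, ((√u + √v)/(1 + √(uv)))² } ≤ 2(u + v). -/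
theorem statement14 (u v : ℝ) (hu : 0 < u) (hv : 0 < v) :
    (∀ α ∈ Set.Icc (0 : ℝ) 1, 0 < 1 - α + α * (u * v)) ∧
    IsLeast {t : ℝ | ∃ α ∈ Set.Icc (0 : ℝ) 1,
        t = ((1 - α + α * u) * (1 - α + α * v)) / (1 - α + α * (u * v))}
      (min 1 (((Real.sqrt u + Real.sqrt v) / (1 + Real.sqrt (u * v))) ^ 2)) ∧
    min 1 (((Real.sqrt u + Real.sqrt v) / (1 + Real.sqrt (u * v))) ^ 2) ≤ 2 * (u + v) := by
  have ha0 : 0 < Real.sqrt u := Real.sqrt_pos.2 hu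
  have hb0 : 0 < Real.sqrt v := Real.sqrt_pos.2 hv
  set a := Real.sqrt u with ha
  set b := Real.sqrt v with hb
  have hau : a ^ 2 = u := Real.sq_sqrt hu.le
  have hbv : b ^ 2 = v := Real.sq_sqrt hv.le
  have habm : Real.sqrt (u * v) = a * b := Real.sqrt_mul hu.le v
  have hab1 : (0:ℝ) < 1 + a * b := by positivity
  have hpos : ∀ α ∈ Set.Icc (0 : ℝ) 1, 0 < 1 - α + α * (u * v) := by
    intro α hα
    obtain ⟨h0, h1⟩ := hα
    rcases lt_or_eq_of_le h1 with h | h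
    · have : 0 ≤ α * (u * v) := mul_nonneg h0 (mul_pos hu hv).le
      linarith
    · rw [h]
      have : 0 < u * v := mul_pos hu hv
      linarith
  refine ⟨hpos, ⟨?_, ?_⟩, ?_⟩
  · -- membership
    rw [habm]
    rcases le_total ((1 - u) * (1 - v)) 0 with hc | hc
    · -- min = 1, attained at α = 0
      have hm1 : 1 ≤ ((a + b) / (1 + a * b)) ^ 2 := by
        rw [div_pow, le_div_iff₀ (by positivity), one_mul]
        nlinarith [hc, hau, hbv]
      rw [min_eq_left hm1]
      exact ⟨0, ⟨le_refl _, zero_le_one⟩, by norm_num⟩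
    · -- min = m, attained at α = 1/(1+ab)
      have hm1 : ((a + b) / (1 + a * b)) ^ 2 ≤ 1 := by
        rw [div_pow, div_le_one (by positivity)]
        nlinarith [hc, hau, hbv]
      rw [min_eq_right hm1]
      refine ⟨1 / (1 + a * b), ⟨by positivity, ?_⟩, ?_⟩
      · rw [div_le_one hab1]
        nlinarith [mul_pos ha0 hb0]
      · rw [← hau, ← hbv]
        have hD : (0:ℝ) < 1 - 1 / (1 + a * b) + 1 / (1 + a * b) * (a ^ 2 * b ^ 2) := by
          rw [hau, hbv]
          exact hpos _ ⟨by positivity, by rw [div_le_one hab1]; nlinarith [mul_pos ha0 hb0]⟩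
        rw [div_pow, div_eq_div_iff (by positivity) hD.ne']
        field_simp
        ring
  · -- lower bound
    rintro t ⟨α, hα, rfl⟩
    have hD := hpos α hα
    obtain ⟨h0, h1⟩ := hα
    rcases le_total ((1 - u) * (1 - v)) 0 with hc | hc
    · refine le_trans (min_le_left _ _) ?_
      rw [le_div_iff₀ hD]
      nlinarith [mul_nonneg h0 (sub_nonneg.2 h1), hc]
    · refine le_trans (min_le_right _ _) ?_
      rw [habm, div_pow, div_le_div_iff₀ (by positivity) hD]
      rw [← hau, ← hbv] at hc ⊢
      nlinarith [mul_nonneg hc (sq_nonneg (α * (1 + a * b) - 1))]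
  · -- ≤ 2(u+v)
    refine le_trans (min_le_right _ _) ?_
    rw [habm, ← hau, ← hbv, div_pow, div_le_iff₀ (by positivity)]
    nlinarith [sq_nonneg (a - b), mul_pos ha0 hb0, sq_nonneg (a*b),
      mul_nonneg (mul_nonneg ha0.le hb0.le) (sq_nonneg (a+b)),
      mul_nonneg (sq_nonneg (a*b)) (sq_nonneg (a+b))]
end

section
/- Let n ≥ 1, W a linear subspace of ℝⁿ, d, c ∈ ℝⁿ, θ ∈ (0,1), and 0 < μ₁ < μ₀. Suppose z^cp : [μ₁, μ₀] → ℝⁿ × ℝⁿ assigns to each μ ∈ [μ₁, μ₀] a central path point z^cp(μ) = (x^cp(μ), s^cp(μ)) at parameter μ. Let z⁰ = (x⁰, s⁰) and z¹ = (x¹, s¹) satisfy x⁰, x¹ ∈ W + d with x⁰, x¹ ≥ 0, s⁰, s¹ ∈ W⊥ + c with s⁰, s¹ ≥ 0, μ̄(z⁰) = μ₀ and μ̄(z¹) = μ₁, and assume the segment [z⁰, z¹] lies in the closed wide neighborhood: for every α ∈ [0,1], ((1−α)x⁰ + αx¹)·((1−α)s⁰ + αs¹) ≥ (1−θ)·μ̄((1−α)z⁰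 + αz¹)·1 entrywise. Then the central path segment CP[μ₁, μ₀] is γ-polarized with γ = (1−θ)²/(16n³): there exists a set B ⊆ [n] such that for all μ ∈ [μ₁, μ₀], x^cp_i(μ) ≥ γ·x^cp_i(μ₀) for every i ∈ B and s^cp_i(μ) ≥ γ·s^cp_i(μ₀) for every i ∉ B. -/
open scoped RealInnerProductSpace

private lemma four_pt {n : ℕ} (W : Submodule ℝ (EuclideanSpace ℝ (Fin n)))
    (x x' s s' : EuclideanSpace ℝ (Fin n)) (hx : x - x' ∈ W) (hs : s - s' ∈ Wᗮ) :
    ⟪x, s⟫ + ⟪x', s'⟫ = ⟪x, s'⟫ + ⟪x', s⟫ := by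
  have h0 : ⟪x - x', s - s'⟫ = 0 := Submodule.inner_right_of_mem_orthogonal hx hs
  rw [inner_sub_left, inner_sub_right, inner_sub_right] at h0
  linarith

theorem statement15 (n : ℕ) (hn : 1 ≤ n)
    (W : Submodule ℝ (EuclideanSpace ℝ (Fin n)))
    (d c : EuclideanSpace ℝ (Fin n))
    (θ μ₀ μ₁ : ℝ) (hθ : θ ∈ Set.Ioo (0 : ℝ) 1) (hμ₁ : 0 < μ₁) (hμ₁₀ : μ₁ < μ₀)
    -- the central path on `[μ₁, μ₀]`
    (xcp scp : ℝ → EuclideanSpace ℝ (Fin n))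
    (hcp : ∀ μ ∈ Set.Icc μ₁ μ₀,
      xcp μ - d ∈ W ∧ scp μ - c ∈ Wᗮ ∧
      (∀ i, 0 < xcp μ i) ∧ (∀ i, 0 < scp μ i) ∧ (∀ i, xcp μ i * scp μ i = μ))
    -- the endpoints `z⁰ = (x0, s0)` and `z¹ = (x1, s1)` of the segment
    (x0 s0 x1 s1 : EuclideanSpace ℝ (Fin n))
    (hx0W : x0 - d ∈ W) (hx1W : x1 - d ∈ W)
    (hs0W : s0 - c ∈ Wᗮ) (hs1W : s1 - c ∈ Wᗮ)
    (hx0pos : ∀ i, 0 ≤ x0 i) (hx1pos : ∀ i, 0 ≤ x1 i)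
    (hs0pos : ∀ i, 0 ≤ s0 i) (hs1pos : ∀ i, 0 ≤ s1 i)
    (hgap0 : ⟪x0, s0⟫ / n = μ₀) (hgap1 : ⟪x1, s1⟫ / n = μ₁)
    -- the segment `[z⁰, z¹]` lies in the closed wide neighborhood `N^{-∞}(θ)`
    (hwide : ∀ α ∈ Set.Icc (0 : ℝ) 1, ∀ i,
      (1 - θ) * (⟪(1 - α) • x0 + α • x1, (1 - α) • s0 + α • s1⟫ / n) ≤
        ((1 - α) * x0 i + α * x1 i) * ((1 - α) * s0 i + α * s1 i)) :
    -- conclusion: `CP[μ₁, μ₀]` is `(1-θ)²/(16n³)`-polarized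
    ∃ B : Finset (Fin n), ∀ μ ∈ Set.Icc μ₁ μ₀,
      (∀ i ∈ B, ((1 - θ) ^ 2 / (16 * n ^ 3)) * xcp μ₀ i ≤ xcp μ i) ∧
      (∀ i ∉ B, ((1 - θ) ^ 2 / (16 * n ^ 3)) * scp μ₀ i ≤ scp μ i) := by
  obtain ⟨hθ0, hθ1⟩ := hθ
  set N : ℝ := (n : ℝ) with hNdef
  have hN1 : (1:ℝ) ≤ N := by rw [hNdef]; exact_mod_cast hn
  have hN0 : (0:ℝ) < N := by linarith
  have hμ₀ : 0 < μ₀ := lt_trans hμ₁ hμ₁₀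
  have hμ₀mem : μ₀ ∈ Set.Icc μ₁ μ₀ := ⟨le_of_lt hμ₁₀, le_refl _⟩
  set γ : ℝ := (1 - θ)^2 / (16 * N^3) with hγdef
  have hθ1' : 0 < 1 - θ := by linarith
  have hγ0 : 0 < γ := by positivity
  have hN3 : (1:ℝ) ≤ N^3 := by simpa using pow_le_pow_left₀ zero_le_one hN1 3
  have hγ1 : γ ≤ 1 := by
    rw [div_le_one (by positivity)]
    nlinarith
  have hγN : 16 * N^3 * γ = (1 - θ)^2 := by
    rw [hγdef]; field_simp
  -- coordinate formula for the inner product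
  have hip : ∀ u v : EuclideanSpace ℝ (Fin n), ⟪u, v⟫ = ∑ i, u i * v i := by
    intro u v
    simp [PiLp.inner_apply, RCLike.inner_apply, starRingEnd_apply, star_trivial]
    exact Finset.sum_congr rfl fun _ _ => mul_comm _ _
  have hterm : ∀ (u v : EuclideanSpace ℝ (Fin n)), (∀ i, 0 ≤ u i) → (∀ i, 0 ≤ v i) →
      ∀ i, u i * v i ≤ ⟪u, v⟫ := by
    intro u v hu hv i
    rw [hip]
    exact Finset.single_le_sum (fun j _ => mul_nonneg (hu j) (hv j)) (Finset.mem_univ i)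
  have hipnn : ∀ (u v : EuclideanSpace ℝ (Fin n)), (∀ i, 0 ≤ u i) → (∀ i, 0 ≤ v i) →
      0 ≤ ⟪u, v⟫ := by
    intro u v hu hv
    rw [hip]
    exact Finset.sum_nonneg fun j _ => mul_nonneg (hu j) (hv j)
  -- duality gaps
  have hcpgap : ∀ μ ∈ Set.Icc μ₁ μ₀, ⟪xcp μ, scp μ⟫ = N * μ := by
    intro μ hμ
    rw [hip, Finset.sum_congr rfl (fun i _ => (hcp μ hμ).2.2.2.2 i)]
    simp [Finset.sum_const, Finset.card_univ, nsmul_eq_mul]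
    exact Or.inl hNdef.symm
  have hgap0' : ⟪x0, s0⟫ = N * μ₀ := by
    rw [div_eq_iff hN0.ne'] at hgap0; rw [hgap0]; ring
  have hgap1' : ⟪x1, s1⟫ = N * μ₁ := by
    rw [div_eq_iff hN0.ne'] at hgap1; rw [hgap1]; ring
  -- the key upper bound: coordinates of feasible points against central path points
  have hub : ∀ μ ∈ Set.Icc μ₁ μ₀, ∀ (x s : EuclideanSpace ℝ (Fin n)) (g : ℝ),
      x - d ∈ W → s - c ∈ Wᗮ → (∀ i, 0 ≤ x i) → (∀ i, 0 ≤ s i) → ⟪x, s⟫ = N * g →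
      ∀ i, x i * scp μ i ≤ N * g + N * μ ∧ xcp μ i * s i ≤ N * g + N * μ := by
    intro μ hμ x s g hxW hsW hx hs hg i
    obtain ⟨hW1, hW2, hxcpos, hscpos, hmul⟩ := hcp μ hμ
    have hxw : x - xcp μ ∈ W := by
      have := W.sub_mem hxW hW1
      simpa [sub_sub_sub_cancel_right] using this
    have hsw : s - scp μ ∈ Wᗮ := by
      have := Wᗮ.sub_mem hsW hW2
      simpa [sub_sub_sub_cancel_right] using this
    have hkey := four_pt W x (xcp μ) s (scp μ) hxw hsw
    rw [hg, hcpgap μ hμ] at hkey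
    have h1 := hterm x (scp μ) hx (fun j => le_of_lt (hscpos j)) i
    have h2 := hipnn (xcp μ) s (fun j => le_of_lt (hxcpos j)) hs
    have h3 := hterm (xcp μ) s (fun j => le_of_lt (hxcpos j)) hs i
    have h4 := hipnn x (scp μ) hx (fun j => le_of_lt (hscpos j))
    exact ⟨by linarith, by linarith⟩
  -- lower bounds on central path coordinates from z¹
  have hx1lb : ∀ μ ∈ Set.Icc μ₁ μ₀, ∀ i, x1 i ≤ 2 * N * xcp μ i := by
    intro μ hμ i
    have h := (hub μ hμ x1 s1 μ₁ hx1W hs1W hx1pos hs1pos hgap1' i).1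
    have hmul := (hcp μ hμ).2.2.2.2 i
    have hscpos := (hcp μ hμ).2.2.2.1 i
    have e1 : (2 * N * xcp μ i) * scp μ i = N * μ + N * μ := by
      linear_combination (2 * N) * hmul
    have e0 : N * μ₁ ≤ N * μ := mul_le_mul_of_nonneg_left hμ.1 hN0.le
    exact le_of_mul_le_mul_right (by linarith) hscpos
  have hs1lb : ∀ μ ∈ Set.Icc μ₁ μ₀, ∀ i, s1 i ≤ 2 * N * scp μ i := by
    intro μ hμ i
    have h := (hub μ hμ x1 s1 μ₁ hx1W hs1W hx1pos hs1pos hgap1' i).2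
    have hmul := (hcp μ hμ).2.2.2.2 i
    have hxcpos := (hcp μ hμ).2.2.1 i
    have e1 : xcp μ i * (2 * N * scp μ i) = N * μ + N * μ := by
      linear_combination (2 * N) * hmul
    have e0 : N * μ₁ ≤ N * μ := mul_le_mul_of_nonneg_left hμ.1 hN0.le
    exact le_of_mul_le_mul_left (by linarith) hxcpos
  -- upper bounds on z⁰ from the central path point at μ₀
  have hx0ub : ∀ i, x0 i ≤ 2 * N * xcp μ₀ i := by
    intro i
    have h := (hub μ₀ hμ₀mem x0 s0 μ₀ hx0W hs0W hx0pos hs0pos hgap0' i).1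
    have hmul := (hcp μ₀ hμ₀mem).2.2.2.2 i
    have hscpos := (hcp μ₀ hμ₀mem).2.2.2.1 i
    have e1 : (2 * N * xcp μ₀ i) * scp μ₀ i = N * μ₀ + N * μ₀ := by
      linear_combination (2 * N) * hmul
    exact le_of_mul_le_mul_right (by linarith) hscpos
  have hs0ub : ∀ i, s0 i ≤ 2 * N * scp μ₀ i := by
    intro i
    have h := (hub μ₀ hμ₀mem x0 s0 μ₀ hx0W hs0W hx0pos hs0pos hgap0' i).2
    have hmul := (hcp μ₀ hμ₀mem).2.2.2.2 i
    have hxcpos := (hcp μ₀ hμ₀mem).2.2.1 i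
    have e1 : xcp μ₀ i * (2 * N * scp μ₀ i) = N * μ₀ + N * μ₀ := by
      linear_combination (2 * N) * hmul
    exact le_of_mul_le_mul_left (by linarith) hxcpos
  -- the cross terms
  have hcross : ⟪x0, s1⟫ + ⟪x1, s0⟫ = N * μ₀ + N * μ₁ := by
    have hxw : x0 - x1 ∈ W := by
      have := W.sub_mem hx0W hx1W
      simpa [sub_sub_sub_cancel_right] using this
    have hsw : s0 - s1 ∈ Wᗮ := by
      have := Wᗮ.sub_mem hs0W hs1W
      simpa [sub_sub_sub_cancel_right] using this
    have h := four_pt W x0 x1 s0 s1 hxw hsw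
    linarith
  -- value of the gap along the segment at α = 1 - γ
  have hinnα : ⟪γ • x0 + (1 - γ) • x1, γ • s0 + (1 - γ) • s1⟫
      = N * (γ * μ₀ + (1 - γ) * μ₁) := by
    rw [inner_add_left, inner_add_right, inner_add_right, real_inner_smul_left,
      real_inner_smul_left, real_inner_smul_left, real_inner_smul_left,
      real_inner_smul_right, real_inner_smul_right, real_inner_smul_right,
      real_inner_smul_right]
    linear_combination (γ * γ) * hgap0' + ((1 - γ) * (1 - γ)) * hgap1'
      + (γ * (1 - γ)) * hcross
  -- the polarization partition
  refine ⟨Finset.univ.filter (fun i => 2 * N * γ * xcp μ₀ i ≤ x1 i), ?_⟩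
  intro μ hμ
  have hX := (hcp μ₀ hμ₀mem).2.2.2.2
  have hXpos := (hcp μ₀ hμ₀mem).2.2.1
  have hSpos := (hcp μ₀ hμ₀mem).2.2.2.1
  constructor
  · intro i hi
    rw [Finset.mem_filter] at hi
    have h1 := hx1lb μ hμ i
    have h2 : 2 * N * (γ * xcp μ₀ i) ≤ 2 * N * (xcp μ i) := by
      have e : 2 * N * (γ * xcp μ₀ i) = 2 * N * γ * xcp μ₀ i := by ring
      linarith [hi.2]
    exact le_of_mul_le_mul_left h2 (by positivity)
  · intro i hi
    simp only [Finset.mem_filter, Finset.mem_univ, true_and, not_le] at hi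
    have hs1i : 2 * N * γ * scp μ₀ i ≤ s1 i := by
      by_contra hcon
      push_neg at hcon
      have hαmem : (1 - γ) ∈ Set.Icc (0:ℝ) 1 := ⟨by linarith, by linarith⟩
      have hw := hwide (1 - γ) hαmem i
      rw [show (1:ℝ) - (1 - γ) = γ by ring] at hw
      rw [hinnα, mul_div_cancel_left₀ _ hN0.ne'] at hw
      -- bound the two factors
      have ha : γ * x0 i + (1 - γ) * x1 i ≤ 4 * N * γ * xcp μ₀ i := by
        have t1 : γ * x0 i ≤ γ * (2 * N * xcp μ₀ i) :=
          mul_le_mul_of_nonneg_left (hx0ub i) hγ0.le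
        have t2 : (1 - γ) * x1 i ≤ x1 i := mul_le_of_le_one_left (hx1pos i) (by linarith)
        have t3 : γ * (2 * N * xcp μ₀ i) + 2 * N * γ * xcp μ₀ i
            = 4 * N * γ * xcp μ₀ i := by ring
        linarith [hi]
      have hb : γ * s0 i + (1 - γ) * s1 i ≤ 4 * N * γ * scp μ₀ i := by
        have t1 : γ * s0 i ≤ γ * (2 * N * scp μ₀ i) :=
          mul_le_mul_of_nonneg_left (hs0ub i) hγ0.le
        have t2 : (1 - γ) * s1 i ≤ s1 i := mul_le_of_le_one_left (hs1pos i) (by linarith)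
        have t3 : γ * (2 * N * scp μ₀ i) + 2 * N * γ * scp μ₀ i
            = 4 * N * γ * scp μ₀ i := by ring
        linarith [hcon]
      have hb0 : 0 ≤ γ * s0 i + (1 - γ) * s1 i :=
        add_nonneg (mul_nonneg hγ0.le (hs0pos i)) (mul_nonneg (by linarith) (hs1pos i))
      have hab : (γ * x0 i + (1 - γ) * x1 i) * (γ * s0 i + (1 - γ) * s1 i)
          ≤ 16 * N^2 * γ^2 * μ₀ := by
        have h4 : (4 * N * γ * xcp μ₀ i) * (4 * N * γ * scp μ₀ i)
            = 16 * N^2 * γ^2 * μ₀ := by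
          linear_combination (16 * N^2 * γ^2) * (hX i)
        calc (γ * x0 i + (1 - γ) * x1 i) * (γ * s0 i + (1 - γ) * s1 i)
            ≤ (4 * N * γ * xcp μ₀ i) * (4 * N * γ * scp μ₀ i) :=
              mul_le_mul ha hb hb0
                (mul_nonneg (by positivity : (0:ℝ) ≤ 4 * N * γ) (hXpos i).le)
          _ = 16 * N^2 * γ^2 * μ₀ := h4
      have hlhs : (1 - θ) * (γ * μ₀) ≤ (1 - θ) * (γ * μ₀ + (1 - γ) * μ₁) :=
        mul_le_mul_of_nonneg_left
          (le_add_of_nonneg_right (mul_nonneg (by linarith) hμ₁.le)) hθ1'.le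
      have hfin : (1 - θ) * (γ * μ₀) ≤ 16 * N^2 * γ^2 * μ₀ := by
        linarith only [hlhs, hw, hab]
      -- derive the contradiction
      have e1 : N * ((1 - θ) * (γ * μ₀)) ≤ N * (16 * N^2 * γ^2 * μ₀) :=
        mul_le_mul_of_nonneg_left hfin hN0.le
      have e2 : N * (16 * N^2 * γ^2 * μ₀) = (1 - θ)^2 * (γ * μ₀) := by
        rw [← hγN]; ring
      have hpos : 0 < γ * μ₀ := by positivity
      have e3 : (1 - θ)^2 * (γ * μ₀) < (1 - θ) * (γ * μ₀) := by
        have hsq : (1 - θ)^2 < 1 - θ := by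
          rw [sq]
          exact mul_lt_of_lt_one_right hθ1' (by linarith)
        exact mul_lt_mul_of_pos_right hsq hpos
      have e4 : (1 - θ) * (γ * μ₀) ≤ N * ((1 - θ) * (γ * μ₀)) :=
        le_mul_of_one_le_left (by positivity) hN1
      linarith only [e1, e2, e3, e4]
    have h2 := hs1lb μ hμ i
    have h3 : 2 * N * (γ * scp μ₀ i) ≤ 2 * N * (scp μ i) := by
      have e : 2 * N * (γ * scp μ₀ i) = 2 * N * γ * scp μ₀ i := by ring
      linarith
    exact le_of_mul_le_mul_left h3 (by positivity)
end

section
/- Let n ≥ 1, W a linear subspace of ℝⁿ, d, c ∈ ℝⁿ, γ ∈ (0,1] and 0 < μ₁ ≤ μ₀. Suppose z^cp : [μ₁, μ₀] → ℝⁿ × ℝⁿ assigns to each μ a central path point (x(μ), s(μ)) at parameter μ, and that the segment is γ-polarized with respect to a partition B ∪ N = [n]: for all μ ∈ [μ₁, μ₀], x_i(μ) ≥ γ·x_i(μ₀) for i ∈ B and s_i(μ) ≥ γ·s_i(μ₀) for i ∈ N. Then for all μ ∈ [μ₁, μ₀]: (1) γ·x_i(μ₀) ≤ x_i(μ) ≤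 n·x_i(μ₀) for i ∈ B; (2) γ·s_i(μ₀) ≤ s_i(μ) ≤ n·s_i(μ₀) for i ∈ N; (3) (μ/(n μ₀))·x_i(μ₀) ≤ x_i(μ) ≤ (μ/(γ μ₀))·x_i(μ₀) for i ∈ N; (4) (μ/(n μ₀))·s_i(μ₀) ≤ s_i(μ) ≤ (μ/(γ μ₀))·s_i(μ₀) for i ∈ B. -/
lemma key16 (n : ℕ) (μ μ₀ : ℝ) (hμ : 0 < μ) (hμ₀ : μ ≤ μ₀)
    (a b : Fin n → ℝ) (ha : ∀ i, 0 < a i) (hb : ∀ i, 0 < b i)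
    (hab : ∀ i, a i * b i = μ * μ₀)
    (hsum : ∑ i, (a i + b i) = n * (μ + μ₀)) (i : Fin n) :
    a i ≤ n * μ₀ := by
  have hμ₀pos : 0 < μ₀ := hμ.trans_le hμ₀
  set m := Real.sqrt (μ * μ₀) with hm
  have hmm : m ^ 2 = μ * μ₀ := Real.sq_sqrt (by positivity)
  have hmpos : 0 < m := Real.sqrt_pos.2 (by positivity)
  have hμm : μ ≤ m := by nlinarith
  have hmμ₀ : m ≤ μ₀ := by nlinarith
  have hnn : 1 ≤ n := Nat.one_le_iff_ne_zero.2 (by rintro rfl; exact i.elim0)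
  have hN : (1 : ℝ) ≤ n := by exact_mod_cast hnn
  have hnpos : (0 : ℝ) < n := by linarith
  have hc : (0:ℝ) < (n:ℝ) * μ₀ := by positivity
  have hterm : ∀ j, 2 * m ≤ a j + b j := by
    intro j
    nlinarith [sq_nonneg (a j - b j), hab j, ha j, hb j, sq_nonneg (a j + b j - 2*m)]
  have hcard : ((Finset.univ.erase i).card : ℝ) = (n : ℝ) - 1 := by
    rw [Finset.card_erase_of_mem (Finset.mem_univ i), Finset.card_univ, Fintype.card_fin]
    push_cast [Nat.cast_sub hnn]
    ring
  have hrest : ((n : ℝ) - 1) * (2 * m) ≤ ∑ j ∈ Finset.univ.erase i, (a j + b j) := by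
    have h := Finset.card_nsmul_le_sum (Finset.univ.erase i) (fun j => a j + b j) (2*m)
      (fun j _ => hterm j)
    rwa [nsmul_eq_mul, hcard] at h
  have hsplit : (∑ j ∈ Finset.univ.erase i, (a j + b j)) + (a i + b i) = n * (μ + μ₀) := by
    rw [Finset.sum_erase_add _ _ (Finset.mem_univ i)]; exact hsum
  have hub : a i + b i ≤ (n : ℝ) * (μ + μ₀) - ((n : ℝ) - 1) * (2 * m) := by linarith
  by_contra hcon
  push_neg at hcon
  have h1 : a i * b i = m ^ 2 := by rw [hmm]; exact hab i
  have h2 : 0 < a i - (n : ℝ) * μ₀ := by linarith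
  have hmn : m ≤ (n:ℝ) * μ₀ := by nlinarith
  have h3 : 0 < a i * ((n : ℝ) * μ₀) - m ^ 2 := by
    nlinarith [mul_pos h2 hc, mul_nonneg (sub_nonneg.2 hmn) (by positivity : (0:ℝ) ≤ (n:ℝ)*μ₀ + m)]
  have hbi : b i = m ^ 2 / a i := by
    field_simp [ne_of_gt (ha i)] at h1 ⊢; linarith [h1]
  have hkey : (a i + m^2/(a i)) - ((n:ℝ)*μ₀ + m^2/((n:ℝ)*μ₀))
      = (a i - (n:ℝ)*μ₀) * (a i * ((n:ℝ)*μ₀) - m^2) / (a i * ((n:ℝ)*μ₀)) := by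
    have hane : a i ≠ 0 := ne_of_gt (ha i)
    have hne : (n:ℝ) * μ₀ ≠ 0 := ne_of_gt hc
    field_simp
    ring
  have h4 : (n:ℝ)*μ₀ + m^2/((n:ℝ)*μ₀) < a i + b i := by
    rw [hbi]
    have := div_pos (mul_pos h2 h3) (mul_pos (ha i) hc)
    linarith [hkey, this]
  have h6 : m^2/((n:ℝ)*μ₀) = μ/(n:ℝ) := by
    rw [hmm]; field_simp
  rw [h6] at h4
  have h7 : μ < (n:ℝ) * ((n:ℝ)*μ - 2*((n:ℝ)-1)*m) := by
    have : μ/(n:ℝ) < (n:ℝ)*μ - 2*((n:ℝ)-1)*m := by linarith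
    calc μ = (n:ℝ) * (μ/(n:ℝ)) := by field_simp
    _ < (n:ℝ) * ((n:ℝ)*μ - 2*((n:ℝ)-1)*m) := by
        exact (mul_lt_mul_iff_right₀ hnpos).2 this
  nlinarith [mul_nonneg (sub_nonneg.2 hN) (sub_nonneg.2 hμm),
    mul_nonneg (mul_nonneg (sub_nonneg.2 hN) (sub_nonneg.2 hN)) (sub_nonneg.2 hμm),
    mul_nonneg hμ.le (sq_nonneg ((n:ℝ)-1)), sq_nonneg ((n:ℝ)-1)]


open scoped RealInnerProductSpace

theorem statement16 (n : ℕ) (hn : 1 ≤ n)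
    (W : Submodule ℝ (EuclideanSpace ℝ (Fin n)))
    (d c : EuclideanSpace ℝ (Fin n))
    (γ μ₀ μ₁ : ℝ) (hγ : γ ∈ Set.Ioc (0 : ℝ) 1) (hμ₁ : 0 < μ₁) (hμ₁₀ : μ₁ ≤ μ₀)
    -- the central path on `[μ₁, μ₀]`
    (x s : ℝ → EuclideanSpace ℝ (Fin n))
    (hcp : ∀ μ ∈ Set.Icc μ₁ μ₀,
      x μ - d ∈ W ∧ s μ - c ∈ Wᗮ ∧
      (∀ i, 0 < x μ i) ∧ (∀ i, 0 < s μ i) ∧ (∀ i, x μ i * s μ i = μ))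
    -- the segment is `γ`-polarized with partition `B ∪ N = [n]`, `N = Bᶜ`
    (B : Finset (Fin n))
    (hpol : ∀ μ ∈ Set.Icc μ₁ μ₀,
      (∀ i ∈ B, γ * x μ₀ i ≤ x μ i) ∧ (∀ i ∉ B, γ * s μ₀ i ≤ s μ i)) :
    ∀ μ ∈ Set.Icc μ₁ μ₀,
      (∀ i ∈ B, γ * x μ₀ i ≤ x μ i ∧ x μ i ≤ n * x μ₀ i) ∧
      (∀ i ∉ B, γ * s μ₀ i ≤ s μ i ∧ s μ i ≤ n * s μ₀ i) ∧
      (∀ i ∉ B, (μ / (n * μ₀)) * x μ₀ i ≤ x μ i ∧ x μ i ≤ (μ / (γ * μ₀)) * x μ₀ i) ∧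
      (∀ i ∈ B, (μ / (n * μ₀)) * s μ₀ i ≤ s μ i ∧ s μ i ≤ (μ / (γ * μ₀)) * s μ₀ i) := by
  intro μ hμ
  have hμ₀mem : μ₀ ∈ Set.Icc μ₁ μ₀ := ⟨hμ₁₀, le_refl _⟩
  obtain ⟨hW0, hWo0, hx0, hs0, hxs0⟩ := hcp μ hμ
  obtain ⟨hW1, hWo1, hx1, hs1, hxs1⟩ := hcp μ₀ hμ₀mem
  obtain ⟨hpolx, hpols⟩ := hpol μ hμ
  have hμpos : 0 < μ := hμ₁.trans_le hμ.1
  have hμle : μ ≤ μ₀ := hμ.2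
  have hμ₀pos : 0 < μ₀ := hμpos.trans_le hμle
  have hγpos : 0 < γ := hγ.1
  have hN : (1 : ℝ) ≤ n := by exact_mod_cast hn
  have hc : (0:ℝ) < (n:ℝ) * μ₀ := by positivity
  -- orthogonality
  have hWx : x μ - x μ₀ ∈ W := by
    have h := W.sub_mem hW0 hW1
    simpa [sub_sub_sub_cancel_right] using h
  have hWs : s μ - s μ₀ ∈ Wᗮ := by
    have h := Wᗮ.sub_mem hWo0 hWo1
    simpa [sub_sub_sub_cancel_right] using h
  have hinner : (inner ℝ (x μ - x μ₀) (s μ - s μ₀) : ℝ) = 0 :=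
    Submodule.inner_right_of_mem_orthogonal hWx hWs
  have hsum0 : ∑ i, (x μ i - x μ₀ i) * (s μ i - s μ₀ i) = 0 := by
    simpa [PiLp.inner_apply, RCLike.inner_apply, conj_trivial, mul_comm] using hinner
  have hmain : ∑ i, (x μ i * s μ₀ i + x μ₀ i * s μ i) = n * (μ + μ₀) := by
    have hterm : ∀ i ∈ Finset.univ (α := Fin n),
        x μ i * s μ₀ i + x μ₀ i * s μ i
          = (μ + μ₀) - (x μ i - x μ₀ i) * (s μ i - s μ₀ i) := by
      intro i _
      linear_combination hxs0 i + hxs1 i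
    rw [Finset.sum_congr rfl hterm, Finset.sum_sub_distrib, hsum0, Finset.sum_const,
      Finset.card_univ, Fintype.card_fin, sub_zero, nsmul_eq_mul]
  have hab : ∀ i, (x μ i * s μ₀ i) * (x μ₀ i * s μ i) = μ * μ₀ := by
    intro i
    calc (x μ i * s μ₀ i) * (x μ₀ i * s μ i)
        = (x μ i * s μ i) * (x μ₀ i * s μ₀ i) := by ring
      _ = μ * μ₀ := by rw [hxs0 i, hxs1 i]
  have hA : ∀ i, x μ i * s μ₀ i ≤ n * μ₀ := fun i =>
    key16 n μ μ₀ hμpos hμle (fun j => x μ j * s μ₀ j) (fun j => x μ₀ j * s μ j)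
      (fun j => mul_pos (hx0 j) (hs1 j)) (fun j => mul_pos (hx1 j) (hs0 j))
      hab hmain i
  have hB' : ∀ i, x μ₀ i * s μ i ≤ n * μ₀ := fun i =>
    key16 n μ μ₀ hμpos hμle (fun j => x μ₀ j * s μ j) (fun j => x μ j * s μ₀ j)
      (fun j => mul_pos (hx1 j) (hs0 j)) (fun j => mul_pos (hx0 j) (hs1 j))
      (fun j => by rw [mul_comm]; exact hab j)
      (by rw [← hmain]; exact Finset.sum_congr rfl fun j _ => add_comm _ _) i
  -- upper bounds for all coordinates
  have hxub : ∀ i, x μ i ≤ n * x μ₀ i := by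
    intro i
    have h := hA i
    have e := hxs1 i
    nlinarith [hs1 i, hx1 i]
  have hsub : ∀ i, s μ i ≤ n * s μ₀ i := by
    intro i
    have h := hB' i
    have e := hxs1 i
    nlinarith [hs1 i, hx1 i]
  refine ⟨fun i hi => ⟨hpolx i hi, hxub i⟩, fun i hi => ⟨hpols i hi, hsub i⟩, ?_, ?_⟩
  · intro i hi
    constructor
    · rw [div_mul_eq_mul_div, div_le_iff₀ hc]
      calc μ * x μ₀ i = (x μ i * s μ i) * x μ₀ i := by rw [hxs0 i]
        _ ≤ (x μ i * ((n:ℝ) * s μ₀ i)) * x μ₀ i :=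
            mul_le_mul_of_nonneg_right
              (mul_le_mul_of_nonneg_left (hsub i) (hx0 i).le) (hx1 i).le
        _ = x μ i * ((n:ℝ) * (x μ₀ i * s μ₀ i)) := by ring
        _ = x μ i * ((n:ℝ) * μ₀) := by rw [hxs1 i]
    · rw [div_mul_eq_mul_div, le_div_iff₀ (by positivity : (0:ℝ) < γ * μ₀)]
      calc x μ i * (γ * μ₀) = x μ i * (γ * (x μ₀ i * s μ₀ i)) := by rw [hxs1 i]
        _ = (x μ i * (γ * s μ₀ i)) * x μ₀ i := by ring
        _ ≤ (x μ i * s μ i) * x μ₀ i :=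
            mul_le_mul_of_nonneg_right
              (mul_le_mul_of_nonneg_left (hpols i hi) (hx0 i).le) (hx1 i).le
        _ = μ * x μ₀ i := by rw [hxs0 i]
  · intro i hi
    constructor
    · rw [div_mul_eq_mul_div, div_le_iff₀ hc]
      calc μ * s μ₀ i = (x μ i * s μ i) * s μ₀ i := by rw [hxs0 i]
        _ ≤ (((n:ℝ) * x μ₀ i) * s μ i) * s μ₀ i :=
            mul_le_mul_of_nonneg_right
              (mul_le_mul_of_nonneg_right (hxub i) (hs0 i).le) (hs1 i).le
        _ = s μ i * ((n:ℝ) * (x μ₀ i * s μ₀ i)) := by ring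
        _ = s μ i * ((n:ℝ) * μ₀) := by rw [hxs1 i]
    · rw [div_mul_eq_mul_div, le_div_iff₀ (by positivity : (0:ℝ) < γ * μ₀)]
      calc s μ i * (γ * μ₀) = s μ i * (γ * (x μ₀ i * s μ₀ i)) := by rw [hxs1 i]
        _ = ((γ * x μ₀ i) * s μ i) * s μ₀ i := by ring
        _ ≤ (x μ i * s μ i) * s μ₀ i :=
            mul_le_mul_of_nonneg_right
              (mul_le_mul_of_nonneg_right (hpolx i hi) (hs0 i).le) (hs1 i).le
        _ = μ * s μ₀ i := by rw [hxs0 i]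
end

section
/- Let M : ℝⁿ → ℝᵐ be a linear map and T ⊆ ker M a linear subspace. Then for every i with 1 ≤ i ≤ n − dim T, the i-th largest singular value of M satisfies σ_i(M) = min{ max{‖Mu‖/‖u‖ : u ∈ S, u ≠ 0} : S a subspace of ℝⁿ with S orthogonal to T and dim S + dim T = n − i + 1 }; that is, in the Courant–Fischer minimum over all subspaces of dimension n − i + 1, one may instead minimize over subspaces orthogonal to T of dimension n − i + 1 − dim T. -/
open scoped RealInnerProductSpace
open Module
set_option linter.unusedSectionVars false
set_option maxHeartbeats 1000000

section helpers
variable {E F : Type*} [NormedAddCommGroup E] [NormedAddCommGroup F]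

noncomputable def rset [Module ℝ E] [Module ℝ F] (M : E →ₗ[ℝ] F) (S : Submodule ℝ E) : Set ℝ :=
  {r : ℝ | ∃ u ∈ S, u ≠ 0 ∧ r = ‖M u‖ / ‖u‖}

variable [InnerProductSpace ℝ E] [InnerProductSpace ℝ F] [FiniteDimensional ℝ E]
  (M : E →ₗ[ℝ] F) {S : Submodule ℝ E}

lemma rset_bdd (S : Submodule ℝ E) : BddAbove (rset M S) := by
  refine ⟨‖LinearMap.toContinuousLinearMap M‖, ?_⟩
  rintro r ⟨u, hu, hne, rfl⟩
  rw [div_le_iff₀ (norm_pos_iff.mpr hne)]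
  exact (LinearMap.toContinuousLinearMap M).le_opNorm u

lemma rset_nonempty (hS : S ≠ ⊥) : (rset M S).Nonempty := by
  obtain ⟨u, hu, hne⟩ := Submodule.exists_mem_ne_zero_of_ne_bot hS
  exact ⟨‖M u‖ / ‖u‖, u, hu, hne, rfl⟩

lemma le_sSup_rset {u : E} (hu : u ∈ S) (hne : u ≠ 0) : ‖M u‖ / ‖u‖ ≤ sSup (rset M S) :=
  le_csSup (rset_bdd M S) ⟨u, hu, hne, rfl⟩

lemma sSup_rset_nonneg (hS : S ≠ ⊥) : 0 ≤ sSup (rset M S) := by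
  obtain ⟨u, hu, hne⟩ := Submodule.exists_mem_ne_zero_of_ne_bot hS
  exact le_trans (div_nonneg (norm_nonneg _) (norm_nonneg _)) (le_sSup_rset M hu hne)

lemma sSup_rset_le (hS : S ≠ ⊥) {c : ℝ} (h : ∀ u ∈ S, u ≠ 0 → ‖M u‖ / ‖u‖ ≤ c) :
    sSup (rset M S) ≤ c := by
  refine csSup_le (rset_nonempty M hS) ?_
  rintro r ⟨u, hu, hne, rfl⟩
  exact h u hu hne

lemma sSup_rset_sup_eq {T : Submodule ℝ E} (hT : T ≤ LinearMap.ker M) (hS : S ≤ Tᗮ)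
    (hSne : S ≠ ⊥) : sSup (rset M (S ⊔ T)) = sSup (rset M S) := by
  have hSbot : S ⊔ T ≠ ⊥ := fun h => hSne (le_bot_iff.mp (h ▸ le_sup_left))
  refine le_antisymm ?_ (csSup_le_csSup (rset_bdd M _) (rset_nonempty M hSne) ?_)
  · refine sSup_rset_le M hSbot ?_
    rintro u hu hne
    obtain ⟨a, ha, b, hb, rfl⟩ := Submodule.mem_sup.mp hu
    have hMb : M b = 0 := hT hb
    have hMab : M (a + b) = M a := by simp [hMb]
    by_cases ha0 : a = 0
    · subst ha0
      simp only [hMab, map_zero, norm_zero, zero_div]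
      exact sSup_rset_nonneg M hSne
    · have hinner : ⟪a, b⟫ = 0 := by
        have := (Submodule.mem_orthogonal T a).mp (hS ha) b hb
        rwa [real_inner_comm] at this
      have hnorm : ‖a‖ ≤ ‖a + b‖ := by
        have h2 : ‖a‖ ^ 2 ≤ ‖a + b‖ ^ 2 := by
          rw [norm_add_sq_real, hinner]
          nlinarith [sq_nonneg ‖b‖]
        nlinarith [norm_nonneg (a + b), norm_nonneg a]
      have hratio : ‖M (a + b)‖ / ‖a + b‖ ≤ ‖M a‖ / ‖a‖ := by
        rw [hMab]
        exact div_le_div_of_nonneg_left (norm_nonneg _) (norm_pos_iff.mpr ha0) hnorm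
      exact hratio.trans (le_sSup_rset M ha ha0)
  · rintro r ⟨u, hu, hne, rfl⟩
    exact ⟨u, Submodule.mem_sup_left hu, hne, rfl⟩

lemma exists_sub_finrank (W : Submodule ℝ E) (d : ℕ) (hd : d ≤ finrank ℝ W) :
    ∃ S : Submodule ℝ E, S ≤ W ∧ finrank ℝ S = d := by
  classical
  let b := finBasis ℝ W
  let w : Fin d → E := fun j => (b (Fin.castLE hd j) : E)
  have hw : LinearIndependent ℝ w := by
    have h1 : LinearIndependent ℝ (fun j : Fin d => b (Fin.castLE hd j)) :=
      b.linearIndependent.comp _ (Fin.castLE_injective hd)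
    exact h1.map' W.subtype (Submodule.ker_subtype W)
  refine ⟨Submodule.span ℝ (Set.range w), ?_, ?_⟩
  · rw [Submodule.span_le]
    rintro x ⟨j, rfl⟩
    exact (b (Fin.castLE hd j)).2
  · rw [finrank_span_eq_card hw, Fintype.card_fin]

end helpers

section helpers2
variable {E : Type*} [NormedAddCommGroup E] [InnerProductSpace ℝ E] [FiniteDimensional ℝ E]

lemma repr_eq_zero_of_mem_span {n d : ℕ} (v : OrthonormalBasis (Fin n) ℝ E)
    (emb : Fin d → Fin n) {u : E}
    (hu : u ∈ Submodule.span ℝ (Set.range (fun j => v (emb j)))) {k : Fin n}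
    (hk : ∀ j, emb j ≠ k) : v.repr u k = 0 := by
  induction hu using Submodule.span_induction with
  | mem x hx =>
    obtain ⟨j, rfl⟩ := hx
    rw [v.repr_self]
    simp [EuclideanSpace.single_apply, (hk j).symm]
  | zero => simp
  | add x y _ _ hx hy => rw [map_add]; simp [hx, hy]
  | smul c x _ hx => rw [map_smul]; simp [hx]

lemma mem_span_of_repr_eq_zero {n d : ℕ} (v : OrthonormalBasis (Fin n) ℝ E)
    (emb : Fin d → Fin n) {u : E}
    (h : ∀ k : Fin n, (∀ j, emb j ≠ k) → v.repr u k = 0) :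
    u ∈ Submodule.span ℝ (Set.range (fun j => v (emb j))) := by
  rw [← v.sum_repr u]
  refine Submodule.sum_mem _ fun k _ => ?_
  by_cases hk : ∃ j, emb j = k
  · obtain ⟨j, rfl⟩ := hk
    exact Submodule.smul_mem _ _ (Submodule.subset_span ⟨j, rfl⟩)
  · push_neg at hk
    rw [h k hk, zero_smul]
    exact Submodule.zero_mem _

lemma finrank_span_onb {n d : ℕ} (v : OrthonormalBasis (Fin n) ℝ E)
    (emb : Fin d → Fin n) (hemb : Function.Injective emb) :
    finrank ℝ (Submodule.span ℝ (Set.range (fun j => v (emb j)))) = d := by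
  have : (fun j => v (emb j)) = ⇑v ∘ emb := rfl
  rw [this, finrank_span_eq_card (v.orthonormal.linearIndependent.comp emb hemb), Fintype.card_fin]

lemma sup_orth_inf (T W : Submodule ℝ E) (hTW : T ≤ W) : (W ⊓ Tᗮ) ⊔ T = W := by
  refine le_antisymm (sup_le inf_le_left hTW) fun u hu => ?_
  rw [Submodule.mem_sup]
  exact ⟨u - T.orthogonalProjectionOnto u,
    ⟨Submodule.sub_mem W hu (hTW (T.orthogonalProjectionOnto u).2),
      Submodule.sub_starProjection_mem_orthogonal (K := T) u⟩,
    T.orthogonalProjectionOnto u, (T.orthogonalProjectionOnto u).2, by abel⟩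

lemma finrank_orth_inf (T W : Submodule ℝ E) (hTW : T ≤ W) :
    finrank ℝ (W ⊓ Tᗮ : Submodule ℝ E) + finrank ℝ T = finrank ℝ W := by
  have h := Submodule.finrank_sup_add_finrank_inf_eq (W ⊓ Tᗮ) T
  rw [sup_orth_inf T W hTW] at h
  have hbot : (W ⊓ Tᗮ) ⊓ T = ⊥ := by
    rw [← le_bot_iff]
    intro x hx
    have h1 : x ∈ Tᗮ ⊓ T := ⟨hx.1.2, hx.2⟩
    rwa [inf_comm, Submodule.inf_orthogonal_eq_bot] at h1
  rw [hbot] at h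
  simpa using h.symm

end helpers2

/-- The `k`-th largest singular value of a linear map between finite-dimensional
normed spaces, via the Courant–Fischer characterization
`σ_k(M) = min { max {‖Mu‖/‖u‖ : u ∈ S, u ≠ 0} : dim S = q - k + 1 }`,
with the convention that it is `0` when `k` exceeds the dimension `q` of the domain. -/
noncomputable def singularValue {E F : Type*} [NormedAddCommGroup E] [NormedAddCommGroup F]
    [Module ℝ E] [Module ℝ F] (M : E →ₗ[ℝ] F) (k : ℕ) : ℝ :=
  if k ≤ Module.finrank ℝ E then
    sInf {t : ℝ | ∃ S : Submodule ℝ E,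
      Module.finrank ℝ S = Module.finrank ℝ E - k + 1 ∧
      t = sSup {r : ℝ | ∃ u ∈ S, u ≠ 0 ∧ r = ‖M u‖ / ‖u‖}}
  else 0

theorem statement18 (n m : ℕ)
    (M : EuclideanSpace ℝ (Fin n) →ₗ[ℝ] EuclideanSpace ℝ (Fin m))
    (T : Submodule ℝ (EuclideanSpace ℝ (Fin n))) (hT : T ≤ LinearMap.ker M)
    (i : ℕ) (hi1 : 1 ≤ i) (hi2 : i ≤ n - Module.finrank ℝ T) :
    IsLeast {t : ℝ | ∃ S : Submodule ℝ (EuclideanSpace ℝ (Fin n)),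
        S ≤ Tᗮ ∧ Module.finrank ℝ S + Module.finrank ℝ T = n - i + 1 ∧
        t = sSup {r : ℝ | ∃ u ∈ S, u ≠ 0 ∧ r = ‖M u‖ / ‖u‖}}
      (singularValue M i) := by
  classical
  have hn : finrank ℝ (EuclideanSpace ℝ (Fin n)) = n := finrank_euclideanSpace_fin
  set t := finrank ℝ T with ht
  have htn : t ≤ n := hn ▸ Submodule.finrank_le T
  have hin : i ≤ n := le_trans hi2 (Nat.sub_le n t)
  have hn1 : 1 ≤ n := le_trans hi1 hin
  have hiL : n - i + 1 ≤ n := by omega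
  have htL : t + 1 ≤ n - i + 1 := by omega
  set L := n - i + 1 with hLdef
  -- spectral setup
  set B : EuclideanSpace ℝ (Fin n) →ₗ[ℝ] EuclideanSpace ℝ (Fin n) :=
    LinearMap.adjoint M ∘ₗ M with hBdef
  have hB : B.IsSymmetric := by
    intro x y
    show ⟪LinearMap.adjoint M (M x), y⟫ = ⟪x, LinearMap.adjoint M (M y)⟫
    rw [LinearMap.adjoint_inner_left, LinearMap.adjoint_inner_right]
  set μ : Fin n → ℝ := hB.eigenvalues hn with hμdef
  set σp : Equiv.Perm (Fin n) := Tuple.sort μ with hσdef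
  set v : OrthonormalBasis (Fin n) ℝ (EuclideanSpace ℝ (Fin n)) :=
    (hB.eigenvectorBasis hn).reindex σp.symm with hvdef
  set ν : Fin n → ℝ := fun j => μ (σp j) with hνdef
  have hmono : Monotone ν := Tuple.monotone_sort μ
  have hrepr : ∀ (x : EuclideanSpace ℝ (Fin n)) (j : Fin n),
      v.repr (B x) j = ν j * v.repr x j := by
    intro x j
    have h := hB.eigenvectorBasis_apply_self_apply hn x (σp j)
    simpa [hvdef, OrthonormalBasis.repr_reindex] using h
  have hMx : ∀ x : EuclideanSpace ℝ (Fin n), ‖M x‖ ^ 2 = ∑ j, ν j * (v.repr x j) ^ 2 := by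
    intro x
    have h1 : (‖M x‖ : ℝ) ^ 2 = ⟪B x, x⟫ := by
      rw [← real_inner_self_eq_norm_sq (M x)]
      show ⟪M x, M x⟫ = ⟪LinearMap.adjoint M (M x), x⟫
      rw [LinearMap.adjoint_inner_left]
    have h2 : ⟪B x, x⟫ = ∑ j, v.repr (B x) j * v.repr x j := by
      rw [← v.sum_inner_mul_inner (B x) x]
      refine Finset.sum_congr rfl fun j _ => ?_
      simp only [v.repr_apply_apply]
      rw [real_inner_comm (B x) (v j)]
    rw [h1, h2]
    refine Finset.sum_congr rfl fun j _ => ?_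
    rw [hrepr x j]; ring
  have hnx : ∀ x : EuclideanSpace ℝ (Fin n), ‖x‖ ^ 2 = ∑ j, (v.repr x j) ^ 2 := by
    intro x
    rw [← real_inner_self_eq_norm_sq x, ← v.sum_inner_mul_inner x x]
    refine Finset.sum_congr rfl fun j _ => ?_
    simp only [v.repr_apply_apply, sq]
    rw [real_inner_comm x (v j)]
  have hν0 : ∀ j, 0 ≤ ν j := by
    intro j
    have h := hMx (v j)
    have hr : ∀ k, v.repr (v j) k = if k = j then 1 else 0 := by
      intro k
      rw [v.repr_self]
      simp [EuclideanSpace.single_apply]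
    rw [Finset.sum_congr rfl (fun k _ => by rw [hr k])] at h
    have hsum : (∑ k, ν k * (if k = j then (1 : ℝ) else 0) ^ 2) = ν j := by
      rw [Finset.sum_eq_single j]
      · simp
      · intro k _ hkj; simp [hkj]
      · intro hj; exact absurd (Finset.mem_univ j) hj
    rw [hsum] at h
    rw [← h]
    positivity
  -- the index n - i
  have hni : n - i < n := by omega
  set jni : Fin n := ⟨n - i, hni⟩ with hjni
  set s : ℝ := Real.sqrt (ν jni) with hsdef
  have hsnn : 0 ≤ s := Real.sqrt_nonneg _
  -- Claim I : every subspace of dimension L has sup ratio at least s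
  have claimI : ∀ S' : Submodule ℝ (EuclideanSpace ℝ (Fin n)), finrank ℝ S' = L →
      s ≤ sSup (rset M S') := by
    intro S' hS'
    have hembok : ∀ j : Fin i, n - i + j.val < n := fun j => by omega
    set emb : Fin i → Fin n := fun j => ⟨n - i + j.val, hembok j⟩ with hembdef
    have hembinj : Function.Injective emb := by
      intro a b hab
      have h := congrArg Fin.val hab
      simp only [hembdef] at h
      exact Fin.ext (by omega)
    set topW := Submodule.span ℝ (Set.range (fun j => v (emb j))) with htopWdef
    have htopWrank : finrank ℝ topW = i := finrank_span_onb v emb hembinj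
    have hpos : 0 < finrank ℝ (S' ⊓ topW : Submodule ℝ (EuclideanSpace ℝ (Fin n))) := by
      have hsum := Submodule.finrank_sup_add_finrank_inf_eq S' topW
      have hle : finrank ℝ (S' ⊔ topW : Submodule ℝ (EuclideanSpace ℝ (Fin n))) ≤ n :=
        le_trans (Submodule.finrank_le _) (le_of_eq hn)
      omega
    have hne : (S' ⊓ topW : Submodule ℝ (EuclideanSpace ℝ (Fin n))) ≠ ⊥ := by
      intro hbot
      rw [hbot, finrank_bot] at hpos
      exact lt_irrefl _ hpos
    obtain ⟨u, hu, hune⟩ := Submodule.exists_mem_ne_zero_of_ne_bot hne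
    have hx0 : ∀ k : Fin n, k.val < n - i → v.repr u k = 0 := by
      intro k hk
      refine repr_eq_zero_of_mem_span v emb hu.2 ?_
      intro j hj
      have h := congrArg Fin.val hj
      simp only [hembdef] at h
      omega
    have h1 : ν jni * ‖u‖ ^ 2 ≤ ‖M u‖ ^ 2 := by
      rw [hMx u, hnx u, Finset.mul_sum]
      refine Finset.sum_le_sum fun k _ => ?_
      by_cases hk : k.val < n - i
      · rw [hx0 k hk]
        simp
      · push_neg at hk
        have hjk : jni ≤ k := by
          rw [Fin.le_def]
          simpa [hjni] using hk
        exact mul_le_mul_of_nonneg_right (hmono hjk) (sq_nonneg _)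
    have hkey : s * ‖u‖ ≤ ‖M u‖ :=
      calc s * ‖u‖ = Real.sqrt (ν jni * ‖u‖ ^ 2) := by
            rw [Real.sqrt_mul (hν0 jni), Real.sqrt_sq (norm_nonneg u)]
        _ ≤ Real.sqrt (‖M u‖ ^ 2) := Real.sqrt_le_sqrt h1
        _ = ‖M u‖ := Real.sqrt_sq (norm_nonneg _)
    have hs' : s ≤ ‖M u‖ / ‖u‖ := (le_div_iff₀ (norm_pos_iff.mpr hune)).mpr hkey
    exact hs'.trans (le_sSup_rset M hu.1 hune)
  -- the low subspace spanned by the first L eigenvectors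
  set embL : Fin L → Fin n := Fin.castLE hiL with hembLdef
  set Wlow := Submodule.span ℝ (Set.range (fun j => v (embL j))) with hWlowdef
  have hWlowrank : finrank ℝ Wlow = L := finrank_span_onb v embL (Fin.castLE_injective hiL)
  have hWlowne : Wlow ≠ ⊥ := by
    intro hbot
    rw [hbot, finrank_bot] at hWlowrank
    omega
  have hWlowrepr : ∀ u ∈ Wlow, ∀ k : Fin n, ¬(k.val < L) → v.repr u k = 0 := by
    intro u hu k hk
    refine repr_eq_zero_of_mem_span v embL hu ?_
    intro j hj
    have h := congrArg Fin.val hj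
    simp only [hembLdef, Fin.coe_castLE] at h
    omega
  have hWlowsup : sSup (rset M Wlow) ≤ s := by
    refine sSup_rset_le M hWlowne ?_
    intro u hu hune
    have h1 : ‖M u‖ ^ 2 ≤ ν jni * ‖u‖ ^ 2 := by
      rw [hMx u, hnx u, Finset.mul_sum]
      refine Finset.sum_le_sum fun k _ => ?_
      by_cases hk : k.val < L
      · have hjk : k ≤ jni := by
          rw [Fin.le_def]
          simp only [hjni]
          omega
        exact mul_le_mul_of_nonneg_right (hmono hjk) (sq_nonneg _)
      · rw [hWlowrepr u hu k hk]
        simp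
    have hkey : ‖M u‖ ≤ s * ‖u‖ :=
      calc ‖M u‖ = Real.sqrt (‖M u‖ ^ 2) := (Real.sqrt_sq (norm_nonneg _)).symm
        _ ≤ Real.sqrt (ν jni * ‖u‖ ^ 2) := Real.sqrt_le_sqrt h1
        _ = s * ‖u‖ := by rw [Real.sqrt_mul (hν0 jni), Real.sqrt_sq (norm_nonneg u)]
    exact (div_le_iff₀ (norm_pos_iff.mpr hune)).mpr hkey
  -- construction of the witness subspace
  have hmain : ∃ S₀ : Submodule ℝ (EuclideanSpace ℝ (Fin n)), S₀ ≤ Tᗮ ∧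
      finrank ℝ S₀ + t = L ∧ sSup (rset M S₀) = s := by
    by_cases hc : ν jni = 0
    · have hs0 : s = 0 := by rw [hsdef, hc, Real.sqrt_zero]
      have hWlowker : Wlow ≤ LinearMap.ker M := by
        intro u hu
        rw [LinearMap.mem_ker]
        have h := hMx u
        have hz : ∀ k : Fin n, k ∈ Finset.univ → ν k * (v.repr u k) ^ 2 = 0 := by
          intro k _
          by_cases hk : k.val < L
          · have hjk : k ≤ jni := by
              rw [Fin.le_def]
              simp only [hjni]
              omega
            have hν : ν k = 0 := le_antisymm ((hmono hjk).trans_eq hc) (hν0 k)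
            rw [hν, zero_mul]
          · rw [hWlowrepr u hu k hk]
            ring
        rw [Finset.sum_congr rfl hz, Finset.sum_const_zero] at h
        have : ‖M u‖ = 0 := by
          have := sq_eq_zero_iff.mp h
          exact this
        exact norm_eq_zero.mp this
      have hkerrank : L ≤ finrank ℝ (LinearMap.ker M) :=
        hWlowrank ▸ Submodule.finrank_mono hWlowker
      have hV := finrank_orth_inf T (LinearMap.ker M) hT
      obtain ⟨S₀, hS₀le, hS₀rank⟩ :=
        exists_sub_finrank ((LinearMap.ker M ⊓ Tᗮ : Submodule ℝ (EuclideanSpace ℝ (Fin n)))) (L - t)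
          (by omega)
      refine ⟨S₀, le_trans hS₀le inf_le_right, by omega, ?_⟩
      rw [hs0]
      have hS₀ne : S₀ ≠ ⊥ := by
        intro hbot
        rw [hbot, finrank_bot] at hS₀rank
        omega
      refine le_antisymm (sSup_rset_le M hS₀ne ?_) (sSup_rset_nonneg M hS₀ne)
      intro u hu hune
      have hMu : M u = 0 := (hS₀le hu).1
      rw [hMu, norm_zero, zero_div]
    · have hνpos : 0 < ν jni := lt_of_le_of_ne (hν0 jni) (Ne.symm hc)
      have hTWlow : T ≤ Wlow := by
        intro u hu
        refine mem_span_of_repr_eq_zero v embL ?_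
        intro k hk
        have hkval : ¬(k.val < L) := by
          intro hlt
          exact hk ⟨k.val, hlt⟩ (Fin.ext (by simp [hembLdef]))
        have hMu : M u = 0 := hT hu
        have h := hMx u
        rw [hMu, norm_zero] at h
        have h0 : (0 : ℝ) = ∑ j, ν j * (v.repr u j) ^ 2 := by
          simpa using h
        have hz := (Finset.sum_eq_zero_iff_of_nonneg
          (fun j _ => mul_nonneg (hν0 j) (sq_nonneg _))).mp h0.symm k (Finset.mem_univ k)
        have hjk : jni ≤ k := by
          rw [Fin.le_def]
          simp only [hjni]
          omega
        have hνk : ν k ≠ 0 := ne_of_gt (lt_of_lt_of_le hνpos (hmono hjk))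
        have := (mul_eq_zero.mp hz).resolve_left hνk
        exact pow_eq_zero_iff two_ne_zero |>.mp this
      set S₀ := (Wlow ⊓ Tᗮ : Submodule ℝ (EuclideanSpace ℝ (Fin n))) with hS₀def
      have hsup : S₀ ⊔ T = Wlow := sup_orth_inf T Wlow hTWlow
      have hrank : finrank ℝ S₀ + t = L := by
        rw [← hWlowrank]
        exact finrank_orth_inf T Wlow hTWlow
      have hS₀ne : S₀ ≠ ⊥ := by
        intro hbot
        rw [hbot, finrank_bot] at hrank
        omega
      refine ⟨S₀, inf_le_right, hrank, ?_⟩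
      have heq : sSup (rset M S₀) = sSup (rset M Wlow) := by
        rw [← hsup]
        exact (sSup_rset_sup_eq M hT inf_le_right hS₀ne).symm
      rw [heq]
      exact le_antisymm hWlowsup (claimI Wlow hWlowrank)
  -- assembly
  obtain ⟨S₀, hS₀T, hS₀rank, hS₀sup⟩ := hmain
  have hS₀ne : S₀ ≠ ⊥ := by
    intro hbot
    rw [hbot, finrank_bot] at hS₀rank
    omega
  have hranksup : ∀ S : Submodule ℝ (EuclideanSpace ℝ (Fin n)), S ≤ Tᗮ →
      finrank ℝ S + t = L → finrank ℝ (S ⊔ T : Submodule ℝ (EuclideanSpace ℝ (Fin n))) = L := by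
    intro S hSle hSrank
    have hdisj := Submodule.finrank_sup_add_finrank_inf_eq S T
    have hinf : S ⊓ T = ⊥ := by
      rw [← le_bot_iff]
      intro x hx
      have h1 : x ∈ Tᗮ ⊓ T := ⟨hSle hx.1, hx.2⟩
      rwa [inf_comm, Submodule.inf_orthogonal_eq_bot] at h1
    rw [hinf, finrank_bot] at hdisj
    omega
  have hsing : singularValue M i = s := by
    rw [singularValue, if_pos (show i ≤ finrank ℝ (EuclideanSpace ℝ (Fin n)) by rw [hn]; omega)]
    have hIL : IsLeast {r : ℝ | ∃ S : Submodule ℝ (EuclideanSpace ℝ (Fin n)),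
        finrank ℝ S = finrank ℝ (EuclideanSpace ℝ (Fin n)) - i + 1 ∧ r = sSup (rset M S)} s := by
      constructor
      · refine ⟨S₀ ⊔ T, ?_, ?_⟩
        · rw [hn]
          exact hranksup S₀ hS₀T hS₀rank
        · rw [sSup_rset_sup_eq M hT hS₀T hS₀ne, hS₀sup]
      · rintro r ⟨S', hS'rank, rfl⟩
        exact claimI S' (by rw [hn] at hS'rank; exact hS'rank)
    exact hIL.csInf_eq
  rw [hsing]
  constructor
  · exact ⟨S₀, hS₀T, hS₀rank, hS₀sup.symm⟩
  · rintro r ⟨S, hSle, hSrank, rfl⟩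
    have hSne : S ≠ ⊥ := by
      intro hbot
      rw [hbot, finrank_bot] at hSrank
      omega
    have heq : sSup (rset M S) = sSup (rset M (S ⊔ T)) :=
      (sSup_rset_sup_eq M hT hSle hSne).symm
    show s ≤ sSup (rset M S)
    rw [heq]
    exact claimI (S ⊔ T) (hranksup S hSle hSrank)
end
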